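/- arXiv:1801.03367 — 2 statements merged into one kernel-verified Lean document; each statement's English description precedes it below -/
import Mathlib

section
/- In an acyclic finite concurrent two-player zero-sum game, memoryless mixed strategies suffice: the value computed over all (history-dependent) mixed strategies equals the value computed over memoryless mixed strategies only, for both players. -/
open scoped BigOperators

/-- A finite acyclic-style concurrent game structure: available-action sets may be
empty (dead-ends). -/
structure AGame where
  S : Type
  A : Type
  [fS : Fintype S]
  [dS : DecidableEq S]
  [fA : Fintype A]
  [dA : DecidableEq A]
  s0 : S
  act1 : S → Finset A
  act2 : S → Finset A
  tr : S → A → A → S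

attribute [instance] AGame.fS AGame.dS AGame.fA AGame.dA

/-- One-step transition relation: `s'` is reachable from `s` by some valid
action pair. -/
def AGame.step (G : AGame) (s s' : G.S) : Prop :=
  ∃ a1 ∈ G.act1 s, ∃ a2 ∈ G.act2 s, G.tr s a1 a2 = s'

/-- Acyclicity: no state is reachable from itself via a nonempty sequence of
transitions. -/
def AGame.Acyclic (G : AGame) : Prop :=
  ∀ s : G.S, ¬ Relation.TransGen G.step s s

/-- Memoryless mixed strategies for action map `act`: at every non-dead-end state,
a probability distribution supported on the available actions. -/
def MStrat (G : AGame) (act : G.S → Finset G.A) : Set (G.S → G.A → ℝ) :=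
  {σ | ∀ s, (∀ a, 0 ≤ σ s a) ∧
        ((act s).Nonempty → ∑ a ∈ act s, σ s a = 1) ∧ ∀ a ∉ act s, σ s a = 0}

open Classical in
/-- Expected total utility of the memoryless profile `(σ1, σ2)` from state `s`:
plays stop at dead-ends; since the game is acyclic, fuel `Fintype.card G.S`
suffices to exhaust every play. -/
noncomputable def aExp (G : AGame) (u : G.S → ℝ) (σ1 σ2 : G.S → G.A → ℝ) :
    ℕ → G.S → ℝ
  | 0, s => u s
  | (n + 1), s =>
      if (G.act1 s).Nonempty ∧ (G.act2 s).Nonempty then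
        u s + ∑ a1 ∈ G.act1 s, ∑ a2 ∈ G.act2 s,
          σ1 s a1 * σ2 s a2 * aExp G u σ1 σ2 n (G.tr s a1 a2)
      else u s

/-- The value of the acyclic game started at `s`, over memoryless mixed
strategies. -/
noncomputable def aVal (G : AGame) (u : G.S → ℝ) (s : G.S) : ℝ :=
  ⨆ σ1 : MStrat G G.act1, ⨅ σ2 : MStrat G G.act2,
    aExp G u σ1.1 σ2.1 (Fintype.card G.S) s

/-- Histories of an acyclic game. -/
abbrev AHist (G : AGame) := List (G.S × G.A × G.A)

/-- History-dependent mixed strategies for action map `act`. -/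
def HStrat (G : AGame) (act : G.S → Finset G.A) : Set (AHist G → G.S → G.A → ℝ) :=
  {σ | ∀ h s, (∀ a, 0 ≤ σ h s a) ∧
        ((act s).Nonempty → ∑ a ∈ act s, σ h s a = 1) ∧ ∀ a ∉ act s, σ h s a = 0}

open Classical in
/-- Expected total utility of a history-dependent profile `(σ1, σ2)` from `s`. -/
noncomputable def aExpH (G : AGame) (u : G.S → ℝ)
    (σ1 σ2 : AHist G → G.S → G.A → ℝ) : ℕ → G.S → AHist G → ℝ
  | 0, s, _ => u s
  | (n + 1), s, h =>
      if (G.act1 s).Nonempty ∧ (G.act2 s).Nonempty then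
        u s + ∑ a1 ∈ G.act1 s, ∑ a2 ∈ G.act2 s,
          σ1 h s a1 * σ2 h s a2 *
            aExpH G u σ1 σ2 n (G.tr s a1 a2) (h ++ [(s, a1, a2)])
      else u s

namespace MemAux


open Classical in
noncomputable def rk (G : AGame) (s : G.S) : ℕ :=
  (Finset.univ.filter (fun t => Relation.TransGen G.step s t)).card

open Classical in
lemma rk_lt {G : AGame} (hacyc : G.Acyclic) {s t : G.S} (h : G.step s t) :
    rk G t < rk G s := by
  classical
  apply Finset.card_lt_card
  constructor
  · intro x hx
    simp only [Finset.mem_filter, Finset.mem_univ, true_and] at hx ⊢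
    exact (Relation.TransGen.single h).trans hx
  · intro hsub
    have ht : t ∈ Finset.univ.filter (fun x => Relation.TransGen G.step s x) := by
      simp only [Finset.mem_filter, Finset.mem_univ, true_and]
      exact Relation.TransGen.single h
    have := hsub ht
    simp only [Finset.mem_filter, Finset.mem_univ, true_and] at this
    exact hacyc t this

lemma rk_le {G : AGame} (s : G.S) : rk G s ≤ Fintype.card G.S := by
  classical
  exact le_trans (Finset.card_filter_le _ _) (le_of_eq (Finset.card_univ))

lemma rk_pos {G : AGame} {s : G.S}
    (h : (G.act1 s).Nonempty ∧ (G.act2 s).Nonempty) : 0 < rk G s := by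
  classical
  obtain ⟨a1, h1⟩ := h.1
  obtain ⟨a2, h2⟩ := h.2
  apply Finset.card_pos.2
  refine ⟨G.tr s a1 a2, ?_⟩
  simp only [rk, Finset.mem_filter, Finset.mem_univ, true_and]
  exact Relation.TransGen.single ⟨a1, h1, a2, h2, rfl⟩

/-- the minimizing value function for a fixed memoryless strategy of player 1 -/
noncomputable def Wf (G : AGame) (u : G.S → ℝ) (σ1 : G.S → G.A → ℝ) : ℕ → G.S → ℝ
  | 0, s => u s
  | (n+1), s =>
      if h : (G.act1 s).Nonempty ∧ (G.act2 s).Nonempty then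
        u s + (G.act2 s).inf' h.2
          (fun a2 => ∑ a1 ∈ G.act1 s, σ1 s a1 * Wf G u σ1 n (G.tr s a1 a2))
      else u s

/-- the value function -/
noncomputable def Uf (G : AGame) (u : G.S → ℝ) : ℕ → G.S → ℝ
  | 0, s => u s
  | (n+1), s =>
      if h : (G.act1 s).Nonempty ∧ (G.act2 s).Nonempty then
        u s + ⨆ σ : MStrat G G.act1, (G.act2 s).inf' h.2
          (fun a2 => ∑ a1 ∈ G.act1 s, σ.1 s a1 * Uf G u n (G.tr s a1 a2))
      else u s

/-- uniform row -/
noncomputable def unif (G : AGame) (act : G.S → Finset G.A) : G.S → G.A → ℝ :=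
  fun s a => if a ∈ act s then ((act s).card : ℝ)⁻¹ else 0

lemma unif_mem (G : AGame) (act : G.S → Finset G.A) : unif G act ∈ MStrat G act := by
  intro s
  refine ⟨fun a => ?_, fun hne => ?_, fun a ha => by simp [unif, ha]⟩
  · unfold unif
    split
    · positivity
    · exact le_refl 0
  · have hcard : (0:ℝ) < (act s).card := by
      exact_mod_cast Finset.card_pos.2 hne
    unfold unif
    rw [Finset.sum_congr rfl (fun a ha => if_pos ha)]
    rw [Finset.sum_const, nsmul_eq_mul]
    field_simp

instance MStrat_nonempty (G : AGame) (act : G.S → Finset G.A) :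
    Nonempty ↥(MStrat G act) := ⟨⟨unif G act, unif_mem G act⟩⟩

section Stab
variable {G : AGame} {u : G.S → ℝ}

lemma Wf_stab (hacyc : G.Acyclic) (σ1 : G.S → G.A → ℝ) :
    ∀ n, ∀ s, rk G s ≤ n → Wf G u σ1 (n+1) s = Wf G u σ1 n s := by
  intro n
  induction n with
  | zero =>
    intro s hs
    have hne : ¬ ((G.act1 s).Nonempty ∧ (G.act2 s).Nonempty) := by
      intro h
      have := rk_pos h; omega
    simp [Wf, hne]
  | succ n ih =>
    intro s hs
    by_cases h : (G.act1 s).Nonempty ∧ (G.act2 s).Nonempty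
    · show Wf G u σ1 (n+2) s = Wf G u σ1 (n+1) s
      simp only [Wf, dif_pos h]
      congr 1
      apply Finset.inf'_congr _ rfl
      intro a2 ha2
      apply Finset.sum_congr rfl
      intro a1 ha1
      congr 1
      apply ih
      have := rk_lt hacyc (⟨a1, ha1, a2, ha2, rfl⟩ : G.step s (G.tr s a1 a2))
      omega
    · simp [Wf, h]

lemma Wf_stab' (hacyc : G.Acyclic) (σ1 : G.S → G.A → ℝ) {n m : ℕ} {s : G.S}
    (hn : rk G s ≤ n) (hm : rk G s ≤ m) : Wf G u σ1 n s = Wf G u σ1 m s := by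
  wlog hle : n ≤ m generalizing n m
  · exact (this hm hn (by omega)).symm
  induction m, hle using Nat.le_induction with
  | base => rfl
  | succ m hm' ih => rw [Wf_stab hacyc σ1 m s (le_trans hn hm')]; exact ih (le_trans hn hm')

lemma Uf_stab (hacyc : G.Acyclic) :
    ∀ n, ∀ s, rk G s ≤ n → Uf G u (n+1) s = Uf G u n s := by
  intro n
  induction n with
  | zero =>
    intro s hs
    have hne : ¬ ((G.act1 s).Nonempty ∧ (G.act2 s).Nonempty) := by
      intro h
      have := rk_pos h; omega
    simp [Uf, hne]
  | succ n ih =>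
    intro s hs
    by_cases h : (G.act1 s).Nonempty ∧ (G.act2 s).Nonempty
    · show Uf G u (n+2) s = Uf G u (n+1) s
      simp only [Uf, dif_pos h]
      have : ∀ σ : ↥(MStrat G G.act1), (G.act2 s).inf' h.2
          (fun a2 => ∑ a1 ∈ G.act1 s, σ.1 s a1 * Uf G u (n+1) (G.tr s a1 a2))
          = (G.act2 s).inf' h.2
          (fun a2 => ∑ a1 ∈ G.act1 s, σ.1 s a1 * Uf G u n (G.tr s a1 a2)) := by
        intro σ
        apply Finset.inf'_congr _ rfl
        intro a2 ha2
        apply Finset.sum_congr rfl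
        intro a1 ha1
        congr 1
        apply ih
        have := rk_lt hacyc (⟨a1, ha1, a2, ha2, rfl⟩ : G.step s (G.tr s a1 a2))
        omega
      congr 1
      exact congrArg iSup (funext this)
    · simp [Uf, h]

lemma Uf_stab' (hacyc : G.Acyclic) {n m : ℕ} {s : G.S}
    (hn : rk G s ≤ n) (hm : rk G s ≤ m) : Uf G u n s = Uf G u m s := by
  wlog hle : n ≤ m generalizing n m
  · exact (this hm hn (by omega)).symm
  induction m, hle using Nat.le_induction with
  | base => rfl
  | succ m hm' ih => rw [Uf_stab hacyc m s (le_trans hn hm')]; exact ih (le_trans hn hm')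

end Stab

section Bounds
variable {G : AGame} {u : G.S → ℝ}

lemma row_sum_le {α : Type*} {t : Finset α} {x f : α → ℝ} {B : ℝ}
    (hx0 : ∀ a, 0 ≤ x a) (hx1 : ∑ a ∈ t, x a = 1) (hf : ∀ a ∈ t, f a ≤ B) :
    ∑ a ∈ t, x a * f a ≤ B := by
  calc ∑ a ∈ t, x a * f a ≤ ∑ a ∈ t, x a * B := by
        apply Finset.sum_le_sum
        intro a ha
        exact mul_le_mul_of_nonneg_left (hf a ha) (hx0 a)
    _ = B := by rw [← Finset.sum_mul, hx1, one_mul]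

lemma row_sum_ge {α : Type*} {t : Finset α} {x f : α → ℝ} {B : ℝ}
    (hx0 : ∀ a, 0 ≤ x a) (hx1 : ∑ a ∈ t, x a = 1) (hf : ∀ a ∈ t, B ≤ f a) :
    B ≤ ∑ a ∈ t, x a * f a := by
  calc B = ∑ a ∈ t, x a * B := by rw [← Finset.sum_mul, hx1, one_mul]
    _ ≤ ∑ a ∈ t, x a * f a := by
        apply Finset.sum_le_sum
        intro a ha
        exact mul_le_mul_of_nonneg_left (hf a ha) (hx0 a)

lemma bdd_of_le {ι : Sort*} {f : ι → ℝ} {B : ℝ} (h : ∀ i, f i ≤ B) :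
    BddAbove (Set.range f) := ⟨B, by rintro y ⟨i, rfl⟩; exact h i⟩

lemma abs_double_sum_le {α : Type*} {t1 t2 : Finset α} {x y : α → ℝ}
    {X : α → α → ℝ} {B : ℝ}
    (hx0 : ∀ a, 0 ≤ x a) (hx1 : ∑ a ∈ t1, x a = 1)
    (hy0 : ∀ a, 0 ≤ y a) (hy1 : ∑ a ∈ t2, y a = 1)
    (hX : ∀ a1 ∈ t1, ∀ a2 ∈ t2, |X a1 a2| ≤ B) :
    |∑ a1 ∈ t1, ∑ a2 ∈ t2, x a1 * y a2 * X a1 a2| ≤ B := by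
  calc |∑ a1 ∈ t1, ∑ a2 ∈ t2, x a1 * y a2 * X a1 a2|
      ≤ ∑ a1 ∈ t1, |∑ a2 ∈ t2, x a1 * y a2 * X a1 a2| := Finset.abs_sum_le_sum_abs _ _
    _ ≤ ∑ a1 ∈ t1, x a1 * B := by
        apply Finset.sum_le_sum
        intro a1 ha1
        calc |∑ a2 ∈ t2, x a1 * y a2 * X a1 a2|
            ≤ ∑ a2 ∈ t2, |x a1 * y a2 * X a1 a2| := Finset.abs_sum_le_sum_abs _ _
          _ = ∑ a2 ∈ t2, x a1 * (y a2 * |X a1 a2|) := by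
              apply Finset.sum_congr rfl
              intro a2 ha2
              rw [abs_mul, abs_mul, abs_of_nonneg (hx0 a1), abs_of_nonneg (hy0 a2), mul_assoc]
          _ = x a1 * ∑ a2 ∈ t2, y a2 * |X a1 a2| := by rw [Finset.mul_sum]
          _ ≤ x a1 * B := by
              apply mul_le_mul_of_nonneg_left _ (hx0 a1)
              exact row_sum_le hy0 hy1 (fun a2 ha2 => hX a1 ha1 a2 ha2)
    _ = B := by rw [← Finset.sum_mul, hx1, one_mul]

lemma aExpH_abs {C : ℝ} (hC : ∀ s, |u s| ≤ C)
    {σ1 σ2 : AHist G → G.S → G.A → ℝ}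
    (hσ1 : σ1 ∈ HStrat G G.act1) (hσ2 : σ2 ∈ HStrat G G.act2) :
    ∀ n (s : G.S) (h : AHist G), |aExpH G u σ1 σ2 n s h| ≤ (n+1) * C := by
  have hC0 : 0 ≤ C := le_trans (abs_nonneg _) (hC G.s0)
  intro n
  induction n with
  | zero => intro s h; simpa [aExpH] using hC s
  | succ n ih =>
    intro s h
    by_cases hne : (G.act1 s).Nonempty ∧ (G.act2 s).Nonempty
    · push_cast
      simp only [aExpH]
      rw [if_pos hne]
      have hD : |∑ a1 ∈ G.act1 s, ∑ a2 ∈ G.act2 s,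
          σ1 h s a1 * σ2 h s a2 * aExpH G u σ1 σ2 n (G.tr s a1 a2) (h ++ [(s, a1, a2)])|
          ≤ (n+1) * C := by
        apply abs_double_sum_le (hσ1 h s).1 ((hσ1 h s).2.1 hne.1)
          (hσ2 h s).1 ((hσ2 h s).2.1 hne.2)
        intro a1 _ a2 _
        exact ih (G.tr s a1 a2) (h ++ [(s, a1, a2)])
      calc |u s + _| ≤ |u s| + _ := abs_add_le _ _
        _ ≤ C + (n+1) * C := add_le_add (hC s) hD
        _ = ((n:ℝ)+1+1) * C := by ring
    · push_cast
      simp only [aExpH]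
      rw [if_neg hne]
      calc |u s| ≤ C := hC s
        _ ≤ ((n:ℝ)+1+1) * C := by nlinarith

lemma Wf_le {C : ℝ} (hC : ∀ s, |u s| ≤ C) {σ1 : G.S → G.A → ℝ}
    (hσ1 : σ1 ∈ MStrat G G.act1) :
    ∀ n (s : G.S), Wf G u σ1 n s ≤ (n+1) * C := by
  have hC0 : 0 ≤ C := le_trans (abs_nonneg _) (hC G.s0)
  intro n
  induction n with
  | zero => intro s; simpa [Wf] using le_trans (le_abs_self _) (hC s)
  | succ n ih =>
    intro s
    by_cases hne : (G.act1 s).Nonempty ∧ (G.act2 s).Nonempty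
    · push_cast
      rw [Wf, dif_pos hne]
      obtain ⟨a2, ha2⟩ := hne.2
      calc u s + (G.act2 s).inf' hne.2
            (fun a2 => ∑ a1 ∈ G.act1 s, σ1 s a1 * Wf G u σ1 n (G.tr s a1 a2))
          ≤ u s + ∑ a1 ∈ G.act1 s, σ1 s a1 * Wf G u σ1 n (G.tr s a1 a2) := by
            apply add_le_add_right
            exact Finset.inf'_le _ ha2
        _ ≤ C + (n+1) * C := by
            apply add_le_add (le_trans (le_abs_self _) (hC s))
            exact row_sum_le (hσ1 s).1 ((hσ1 s).2.1 hne.1) (fun a1 _ => ih (G.tr s a1 a2))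
        _ = ((n:ℝ)+1+1) * C := by ring
    · push_cast
      rw [Wf, dif_neg hne]
      calc u s ≤ C := le_trans (le_abs_self _) (hC s)
        _ ≤ ((n:ℝ)+1+1) * C := by nlinarith

lemma Uf_abs {C : ℝ} (hC : ∀ s, |u s| ≤ C) :
    ∀ n (s : G.S), |Uf G u n s| ≤ (n+1) * C := by
  have hC0 : 0 ≤ C := le_trans (abs_nonneg _) (hC G.s0)
  intro n
  induction n with
  | zero => intro s; simpa [Uf] using hC s
  | succ n ih =>
    intro s
    by_cases hne : (G.act1 s).Nonempty ∧ (G.act2 s).Nonempty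
    · push_cast
      rw [Uf, dif_pos hne]
      obtain ⟨a2, ha2⟩ := hne.2
      have hub : ∀ σ : ↥(MStrat G G.act1), (G.act2 s).inf' hne.2
          (fun a2 => ∑ a1 ∈ G.act1 s, σ.1 s a1 * Uf G u n (G.tr s a1 a2)) ≤ (n+1) * C := by
        intro σ
        apply le_trans (Finset.inf'_le _ ha2)
        exact row_sum_le (σ.2 s).1 ((σ.2 s).2.1 hne.1)
          (fun a1 _ => le_trans (le_abs_self _) (ih (G.tr s a1 a2)))
      have hlb : -((n+1) * C) ≤ ⨆ σ : ↥(MStrat G G.act1), (G.act2 s).inf' hne.2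
          (fun a2 => ∑ a1 ∈ G.act1 s, σ.1 s a1 * Uf G u n (G.tr s a1 a2)) := by
        obtain ⟨σ⟩ := MStrat_nonempty G G.act1
        refine le_trans ?_ (le_ciSup (bdd_of_le hub) σ)
        apply Finset.le_inf'
        intro a2' _
        apply row_sum_ge (σ.2 s).1 ((σ.2 s).2.1 hne.1)
        intro a1 _
        exact neg_le_of_abs_le (ih (G.tr s a1 a2'))
      have habs : |⨆ σ : ↥(MStrat G G.act1), (G.act2 s).inf' hne.2
          (fun a2 => ∑ a1 ∈ G.act1 s, σ.1 s a1 * Uf G u n (G.tr s a1 a2))| ≤ (n+1) * C :=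
        abs_le.2 ⟨hlb, ciSup_le hub⟩
      calc |u s + _| ≤ |u s| + _ := abs_add_le _ _
        _ ≤ C + (n+1) * C := add_le_add (hC s) habs
        _ = ((n:ℝ)+1+1) * C := by ring
    · push_cast
      rw [Uf, dif_neg hne]
      calc |u s| ≤ C := hC s
        _ ≤ ((n:ℝ)+1+1) * C := by nlinarith

lemma stage_bdd {C : ℝ} (hC : ∀ s, |u s| ≤ C) {s : G.S} {n : ℕ}
    (hne : (G.act1 s).Nonempty ∧ (G.act2 s).Nonempty) :
    BddAbove (Set.range fun σ : ↥(MStrat G G.act1) => (G.act2 s).inf' hne.2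
      (fun a2 => ∑ a1 ∈ G.act1 s, σ.1 s a1 * Uf G u n (G.tr s a1 a2))) := by
  obtain ⟨a2, ha2⟩ := hne.2
  apply bdd_of_le (B := (n+1) * C)
  intro σ
  apply le_trans (Finset.inf'_le _ ha2)
  exact row_sum_le (σ.2 s).1 ((σ.2 s).2.1 hne.1)
    (fun a1 _ => le_trans (le_abs_self _) (Uf_abs hC n (G.tr s a1 a2)))

end Bounds

section Main
variable {G : AGame} {u : G.S → ℝ}

lemma double_swap {α : Type*} (t1 t2 : Finset α) (x y : α → ℝ) (X : α → α → ℝ) :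
    ∑ a2 ∈ t2, y a2 * ∑ a1 ∈ t1, x a1 * X a1 a2
      = ∑ a1 ∈ t1, ∑ a2 ∈ t2, x a1 * y a2 * X a1 a2 := by
  simp_rw [Finset.mul_sum]
  rw [Finset.sum_comm]
  apply Finset.sum_congr rfl
  intro a1 _
  apply Finset.sum_congr rfl
  intro a2 _
  ring

/-- Player 2 has a memoryless best response attaining `Wf`. -/
lemma exists_best2 (hacyc : G.Acyclic) {σ1 : G.S → G.A → ℝ} (hσ1 : σ1 ∈ MStrat G G.act1) :
    ∃ σ2 ∈ MStrat G G.act2, ∀ n (s : G.S), rk G s ≤ n →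
      aExp G u σ1 σ2 n s = Wf G u σ1 n s := by
  classical
  set N := Fintype.card G.S with hN
  set g : G.S → G.A → ℝ :=
    fun s a2 => ∑ a1 ∈ G.act1 s, σ1 s a1 * Wf G u σ1 N (G.tr s a1 a2) with hg
  have hrow : ∀ s : G.S, ∃ row : G.A → ℝ,
      ((∀ a, 0 ≤ row a) ∧ ((G.act2 s).Nonempty → ∑ a ∈ G.act2 s, row a = 1) ∧
        (∀ a ∉ G.act2 s, row a = 0)) ∧
      ∀ h2 : (G.act2 s).Nonempty, ∃ b ∈ G.act2 s,
        (∀ X : G.A → ℝ, ∑ a2 ∈ G.act2 s, row a2 * X a2 = X b) ∧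
        g s b = (G.act2 s).inf' h2 (g s) := by
    intro s
    by_cases h2 : (G.act2 s).Nonempty
    · obtain ⟨b, hb, hbeq⟩ := Finset.exists_mem_eq_inf' h2 (g s)
      refine ⟨fun a => if a = b then 1 else 0, ⟨?_, ?_, ?_⟩, ?_⟩
      · intro a; simp only []; split <;> norm_num
      · intro _; rw [Finset.sum_ite_eq' (G.act2 s) b (fun _ => (1:ℝ))]; simp [hb]
      · intro a ha
        have : a ≠ b := fun hab => ha (hab ▸ hb)
        simp [this]
      · intro _
        refine ⟨b, hb, fun X => ?_, hbeq.symm⟩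
        have : ∀ a2 ∈ G.act2 s, (if a2 = b then (1:ℝ) else 0) * X a2
            = if a2 = b then X a2 else 0 := by
          intro a2 _; split <;> ring
        rw [Finset.sum_congr rfl this, Finset.sum_ite_eq' (G.act2 s) b X, if_pos hb]
    · exact ⟨fun _ => 0, ⟨fun a => le_refl 0, fun h => absurd h h2, fun _ _ => rfl⟩,
        fun h => absurd h h2⟩
  choose row hvalid hbest using hrow
  refine ⟨row, fun s => hvalid s, ?_⟩
  intro n
  induction n with
  | zero => intro s _; simp [aExp, Wf]
  | succ n ih =>
    intro s hs
    by_cases hne : (G.act1 s).Nonempty ∧ (G.act2 s).Nonempty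
    · obtain ⟨b, hb, hind, hbeq⟩ := hbest s hne.2
      show aExp G u σ1 (row) (n+1) s = Wf G u σ1 (n+1) s
      rw [Wf, dif_pos hne]
      simp only [aExp]
      rw [if_pos hne]
      congr 1
      have hswap : ∀ a1 ∈ G.act1 s,
          ∑ a2 ∈ G.act2 s, σ1 s a1 * row s a2 * aExp G u σ1 (row) n (G.tr s a1 a2)
          = σ1 s a1 * aExp G u σ1 (row) n (G.tr s a1 b) := by
        intro a1 _
        have := hind (fun a2 => σ1 s a1 * aExp G u σ1 (row) n (G.tr s a1 a2))
        rw [← this]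
        apply Finset.sum_congr rfl
        intro a2 _
        ring
      rw [Finset.sum_congr rfl hswap]
      have hrk : ∀ a1 ∈ G.act1 s, ∀ a2 ∈ G.act2 s, rk G (G.tr s a1 a2) ≤ n := by
        intro a1 ha1 a2 ha2
        have := rk_lt hacyc (⟨a1, ha1, a2, ha2, rfl⟩ : G.step s (G.tr s a1 a2))
        omega
      have hsum : ∑ a1 ∈ G.act1 s, σ1 s a1 * aExp G u σ1 (row) n (G.tr s a1 b) = g s b := by
        apply Finset.sum_congr rfl
        intro a1 ha1
        rw [ih (G.tr s a1 b) (hrk a1 ha1 b hb),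
          Wf_stab' hacyc σ1 (hrk a1 ha1 b hb) (rk_le _)]
      rw [hsum, hbeq]
      apply Finset.inf'_congr _ rfl
      intro a2 ha2
      apply Finset.sum_congr rfl
      intro a1 ha1
      rw [Wf_stab' hacyc σ1 (hrk a1 ha1 a2 ha2) (rk_le _)]
    · show aExp G u σ1 (row) (n+1) s = Wf G u σ1 (n+1) s
      rw [Wf, dif_neg hne]
      simp only [aExp]
      rw [if_neg hne]

/-- `Wf` is a lower bound on the payoff against any memoryless strategy of player 2. -/
lemma Wf_le_aExp {σ1 σ2 : G.S → G.A → ℝ} (hσ1 : σ1 ∈ MStrat G G.act1)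
    (hσ2 : σ2 ∈ MStrat G G.act2) :
    ∀ n (s : G.S), Wf G u σ1 n s ≤ aExp G u σ1 σ2 n s := by
  intro n
  induction n with
  | zero => intro s; simp [aExp, Wf]
  | succ n ih =>
    intro s
    by_cases hne : (G.act1 s).Nonempty ∧ (G.act2 s).Nonempty
    · rw [Wf, dif_pos hne]
      show _ ≤ aExp G u σ1 σ2 (n+1) s
      simp only [aExp]
      rw [if_pos hne]
      apply add_le_add_right
      rw [← double_swap (G.act1 s) (G.act2 s) (σ1 s) (σ2 s)
        (fun a1 a2 => aExp G u σ1 σ2 n (G.tr s a1 a2))]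
      apply le_trans (b := ∑ a2 ∈ G.act2 s, σ2 s a2 *
        ∑ a1 ∈ G.act1 s, σ1 s a1 * Wf G u σ1 n (G.tr s a1 a2))
      · apply row_sum_ge (hσ2 s).1 ((hσ2 s).2.1 hne.2)
        intro a2 ha2
        exact Finset.inf'_le _ ha2
      · apply Finset.sum_le_sum
        intro a2 _
        apply mul_le_mul_of_nonneg_left _ ((hσ2 s).1 a2)
        apply Finset.sum_le_sum
        intro a1 _
        exact mul_le_mul_of_nonneg_left (ih _) ((hσ1 s).1 a1)
    · rw [Wf, dif_neg hne]
      show _ ≤ aExp G u σ1 σ2 (n+1) s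
      simp only [aExp]
      rw [if_neg hne]

/-- `Wf` is a lower bound on the payoff of the lifted strategy against any
history-dependent strategy of player 2. -/
lemma Wf_le_aExpH {σ1 : G.S → G.A → ℝ} {σ2 : AHist G → G.S → G.A → ℝ}
    (hσ1 : σ1 ∈ MStrat G G.act1) (hσ2 : σ2 ∈ HStrat G G.act2) :
    ∀ n (s : G.S) (h : AHist G),
      Wf G u σ1 n s ≤ aExpH G u (fun _ => σ1) σ2 n s h := by
  intro n
  induction n with
  | zero => intro s h; simp [aExpH, Wf]
  | succ n ih =>
    intro s h
    by_cases hne : (G.act1 s).Nonempty ∧ (G.act2 s).Nonempty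
    · rw [Wf, dif_pos hne]
      show _ ≤ aExpH G u (fun _ => σ1) σ2 (n+1) s h
      simp only [aExpH]
      rw [if_pos hne]
      apply add_le_add_right
      have hsw := double_swap (G.act1 s) (G.act2 s) (σ1 s) (σ2 h s)
        (fun a1 a2 => aExpH G u (fun _ => σ1) σ2 n (G.tr s a1 a2) (h ++ [(s, a1, a2)]))
      rw [← hsw]
      apply le_trans (b := ∑ a2 ∈ G.act2 s, σ2 h s a2 *
        ∑ a1 ∈ G.act1 s, σ1 s a1 * Wf G u σ1 n (G.tr s a1 a2))
      · apply row_sum_ge (hσ2 h s).1 ((hσ2 h s).2.1 hne.2)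
        intro a2 ha2
        exact Finset.inf'_le _ ha2
      · apply Finset.sum_le_sum
        intro a2 _
        apply mul_le_mul_of_nonneg_left _ ((hσ2 h s).1 a2)
        apply Finset.sum_le_sum
        intro a1 _
        exact mul_le_mul_of_nonneg_left (ih _ _) ((hσ1 s).1 a1)
    · rw [Wf, dif_neg hne]
      show _ ≤ aExpH G u (fun _ => σ1) σ2 (n+1) s h
      simp only [aExpH]
      rw [if_neg hne]

lemma Wf_le_Uf {C : ℝ} (hC : ∀ s, |u s| ≤ C) {σ1 : G.S → G.A → ℝ}
    (hσ1 : σ1 ∈ MStrat G G.act1) :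
    ∀ n (s : G.S), Wf G u σ1 n s ≤ Uf G u n s := by
  intro n
  induction n with
  | zero => intro s; simp [Uf, Wf]
  | succ n ih =>
    intro s
    by_cases hne : (G.act1 s).Nonempty ∧ (G.act2 s).Nonempty
    · rw [Wf, dif_pos hne, Uf, dif_pos hne]
      apply add_le_add_right
      apply le_trans (b := (G.act2 s).inf' hne.2
        (fun a2 => ∑ a1 ∈ G.act1 s, σ1 s a1 * Uf G u n (G.tr s a1 a2)))
      · apply Finset.le_inf'
        intro a2 ha2
        apply le_trans (Finset.inf'_le _ ha2)
        apply Finset.sum_le_sum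
        intro a1 _
        exact mul_le_mul_of_nonneg_left (ih _) ((hσ1 s).1 a1)
      · exact le_ciSup (stage_bdd hC hne) ⟨σ1, hσ1⟩
    · rw [Wf, dif_neg hne, Uf, dif_neg hne]

end Main

section Eps
variable {G : AGame} {u : G.S → ℝ}

/-- Player 1 has a single memoryless strategy that is `(n+1)ε`-optimal everywhere. -/
lemma exists_eps (hacyc : G.Acyclic) {C : ℝ} (hC : ∀ s, |u s| ≤ C)
    {ε : ℝ} (hε : 0 < ε) :
    ∃ σ1 ∈ MStrat G G.act1, ∀ n (s : G.S), rk G s ≤ n →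
      Uf G u n s - (n+1) * ε ≤ Wf G u σ1 n s := by
  classical
  set N := Fintype.card G.S with hN
  have hrow : ∀ s : G.S, ∃ row : G.A → ℝ,
      ((∀ a, 0 ≤ row a) ∧ ((G.act1 s).Nonempty → ∑ a ∈ G.act1 s, row a = 1) ∧
        (∀ a ∉ G.act1 s, row a = 0)) ∧
      ∀ hne : (G.act1 s).Nonempty ∧ (G.act2 s).Nonempty,
        (⨆ σ : ↥(MStrat G G.act1), (G.act2 s).inf' hne.2
            (fun a2 => ∑ a1 ∈ G.act1 s, σ.1 s a1 * Uf G u N (G.tr s a1 a2))) - ε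
          ≤ (G.act2 s).inf' hne.2
            (fun a2 => ∑ a1 ∈ G.act1 s, row a1 * Uf G u N (G.tr s a1 a2)) := by
    intro s
    by_cases hne : (G.act1 s).Nonempty ∧ (G.act2 s).Nonempty
    · have hlt : (⨆ σ : ↥(MStrat G G.act1), (G.act2 s).inf' hne.2
          (fun a2 => ∑ a1 ∈ G.act1 s, σ.1 s a1 * Uf G u N (G.tr s a1 a2))) - ε
          < ⨆ σ : ↥(MStrat G G.act1), (G.act2 s).inf' hne.2
          (fun a2 => ∑ a1 ∈ G.act1 s, σ.1 s a1 * Uf G u N (G.tr s a1 a2)) := by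
        linarith
      obtain ⟨σ, hσ⟩ := exists_lt_of_lt_ciSup hlt
      refine ⟨σ.1 s, ⟨(σ.2 s).1, (σ.2 s).2.1, (σ.2 s).2.2⟩, ?_⟩
      intro hne'
      have : (G.act2 s).inf' hne'.2
          (fun a2 => ∑ a1 ∈ G.act1 s, σ.1 s a1 * Uf G u N (G.tr s a1 a2))
          = (G.act2 s).inf' hne.2
          (fun a2 => ∑ a1 ∈ G.act1 s, σ.1 s a1 * Uf G u N (G.tr s a1 a2)) := rfl
      rw [this]
      exact le_of_lt hσ
    · refine ⟨unif G G.act1 s, ?_, fun hne' => absurd hne' hne⟩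
      have := unif_mem G G.act1 s
      exact ⟨this.1, this.2.1, this.2.2⟩
  choose row hvalid hopt using hrow
  refine ⟨row, fun s => hvalid s, ?_⟩
  intro n
  induction n with
  | zero =>
    intro s _
    simp only [Uf, Wf]
    push_cast
    linarith
  | succ n ih =>
    intro s hs
    by_cases hne : (G.act1 s).Nonempty ∧ (G.act2 s).Nonempty
    · have hrk : ∀ a1 ∈ G.act1 s, ∀ a2 ∈ G.act2 s, rk G (G.tr s a1 a2) ≤ n := by
        intro a1 ha1 a2 ha2
        have := rk_lt hacyc (⟨a1, ha1, a2, ha2, rfl⟩ : G.step s (G.tr s a1 a2))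
        omega
      rw [Wf, dif_pos hne, Uf, dif_pos hne]
      -- the stage family at fuel n agrees with the one at fuel N
      have hfam : ∀ σ : ↥(MStrat G G.act1), (G.act2 s).inf' hne.2
          (fun a2 => ∑ a1 ∈ G.act1 s, σ.1 s a1 * Uf G u n (G.tr s a1 a2))
          = (G.act2 s).inf' hne.2
          (fun a2 => ∑ a1 ∈ G.act1 s, σ.1 s a1 * Uf G u N (G.tr s a1 a2)) := by
        intro σ
        apply Finset.inf'_congr _ rfl
        intro a2 ha2
        apply Finset.sum_congr rfl
        intro a1 ha1
        rw [Uf_stab' hacyc (hrk a1 ha1 a2 ha2) (rk_le _)]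
      have hsup : (⨆ σ : ↥(MStrat G G.act1), (G.act2 s).inf' hne.2
          (fun a2 => ∑ a1 ∈ G.act1 s, σ.1 s a1 * Uf G u n (G.tr s a1 a2)))
          = ⨆ σ : ↥(MStrat G G.act1), (G.act2 s).inf' hne.2
          (fun a2 => ∑ a1 ∈ G.act1 s, σ.1 s a1 * Uf G u N (G.tr s a1 a2)) :=
        congrArg iSup (funext hfam)
      rw [hsup]
      -- lower bound the inf' term of Wf
      have hstep : (G.act2 s).inf' hne.2
          (fun a2 => ∑ a1 ∈ G.act1 s, row s a1 * Uf G u N (G.tr s a1 a2)) - (n+1) * ε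
          ≤ (G.act2 s).inf' hne.2
          (fun a2 => ∑ a1 ∈ G.act1 s, row s a1 * Wf G u (row) n (G.tr s a1 a2)) := by
        apply Finset.le_inf'
        intro a2 ha2
        have h1 : ∑ a1 ∈ G.act1 s, row s a1 * Uf G u N (G.tr s a1 a2) - (n+1) * ε
            ≤ ∑ a1 ∈ G.act1 s, row s a1 * Wf G u (row) n (G.tr s a1 a2) := by
          have hsum1 : ∑ a1 ∈ G.act1 s, row s a1 * Uf G u N (G.tr s a1 a2)
              = ∑ a1 ∈ G.act1 s, row s a1 * Uf G u n (G.tr s a1 a2) := by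
            apply Finset.sum_congr rfl
            intro a1 ha1
            rw [Uf_stab' hacyc (rk_le _) (hrk a1 ha1 a2 ha2)]
          rw [hsum1]
          have h2 : ∑ a1 ∈ G.act1 s, row s a1 *
              (Uf G u n (G.tr s a1 a2) - (n+1) * ε)
              ≤ ∑ a1 ∈ G.act1 s, row s a1 * Wf G u (row) n (G.tr s a1 a2) := by
            apply Finset.sum_le_sum
            intro a1 ha1
            exact mul_le_mul_of_nonneg_left
              (ih (G.tr s a1 a2) (hrk a1 ha1 a2 ha2)) ((hvalid s).1 a1)
          have h3 : ∑ a1 ∈ G.act1 s, row s a1 *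
              (Uf G u n (G.tr s a1 a2) - (n+1) * ε)
              = ∑ a1 ∈ G.act1 s, row s a1 * Uf G u n (G.tr s a1 a2) - (n+1) * ε := by
            simp_rw [mul_sub]
            rw [Finset.sum_sub_distrib]
            congr 1
            rw [← Finset.sum_mul, (hvalid s).2.1 hne.1, one_mul]
          linarith [h2, h3]
        have h4 : (G.act2 s).inf' hne.2
            (fun a2 => ∑ a1 ∈ G.act1 s, row s a1 * Uf G u N (G.tr s a1 a2))
            ≤ ∑ a1 ∈ G.act1 s, row s a1 * Uf G u N (G.tr s a1 a2) :=
          Finset.inf'_le _ ha2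
        linarith
      have hopt' := hopt s hne
      push_cast
      linarith
    · rw [Wf, dif_neg hne, Uf, dif_neg hne]
      have : (0:ℝ) < ((n:ℝ)+1+1) * ε := by positivity
      push_cast
      linarith

end Eps

section BR
variable {G : AGame} {u : G.S → ℝ}

lemma lift_mem {σ : G.S → G.A → ℝ} {act : G.S → Finset G.A} (h : σ ∈ MStrat G act) :
    (fun _ : AHist G => σ) ∈ HStrat G act := fun _ s => h s

instance HStrat_nonempty (G : AGame) (act : G.S → Finset G.A) :
    Nonempty ↥(HStrat G act) :=
  ⟨⟨fun _ => unif G act, lift_mem (unif_mem G act)⟩⟩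

/-- Against any history-dependent strategy of player 1, player 2 has a
history-dependent response keeping the payoff below `Uf`. -/
lemma exists_br (hacyc : G.Acyclic) {C : ℝ} (hC : ∀ s, |u s| ≤ C)
    {σ1 : AHist G → G.S → G.A → ℝ} (hσ1 : σ1 ∈ HStrat G G.act1) :
    ∃ σ2 ∈ HStrat G G.act2, ∀ n (s : G.S) (h : AHist G), rk G s ≤ n →
      aExpH G u σ1 σ2 n s h ≤ Uf G u n s := by
  classical
  set N := Fintype.card G.S with hN
  set g : AHist G → G.S → G.A → ℝ :=
    fun h s a2 => ∑ a1 ∈ G.act1 s, σ1 h s a1 * Uf G u N (G.tr s a1 a2) with hg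
  have hrow : ∀ (h : AHist G) (s : G.S), ∃ row : G.A → ℝ,
      ((∀ a, 0 ≤ row a) ∧ ((G.act2 s).Nonempty → ∑ a ∈ G.act2 s, row a = 1) ∧
        (∀ a ∉ G.act2 s, row a = 0)) ∧
      ∀ h2 : (G.act2 s).Nonempty, ∃ b ∈ G.act2 s,
        (∀ X : G.A → ℝ, ∑ a2 ∈ G.act2 s, row a2 * X a2 = X b) ∧
        g h s b = (G.act2 s).inf' h2 (g h s) := by
    intro h s
    by_cases h2 : (G.act2 s).Nonempty
    · obtain ⟨b, hb, hbeq⟩ := Finset.exists_mem_eq_inf' h2 (g h s)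
      refine ⟨fun a => if a = b then 1 else 0, ⟨?_, ?_, ?_⟩, ?_⟩
      · intro a; simp only []; split <;> norm_num
      · intro _; rw [Finset.sum_ite_eq' (G.act2 s) b (fun _ => (1:ℝ))]; simp [hb]
      · intro a ha
        have : a ≠ b := fun hab => ha (hab ▸ hb)
        simp [this]
      · intro _
        refine ⟨b, hb, fun X => ?_, hbeq.symm⟩
        have : ∀ a2 ∈ G.act2 s, (if a2 = b then (1:ℝ) else 0) * X a2
            = if a2 = b then X a2 else 0 := by
          intro a2 _; split <;> ring
        rw [Finset.sum_congr rfl this, Finset.sum_ite_eq' (G.act2 s) b X, if_pos hb]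
    · exact ⟨fun _ => 0, ⟨fun a => le_refl 0, fun h => absurd h h2, fun _ _ => rfl⟩,
        fun h => absurd h h2⟩
  choose row hvalid hbest using hrow
  refine ⟨row, fun h s => hvalid h s, ?_⟩
  intro n
  induction n with
  | zero => intro s h _; simp [aExpH, Uf]
  | succ n ih =>
    intro s h hs
    by_cases hne : (G.act1 s).Nonempty ∧ (G.act2 s).Nonempty
    · have hrk : ∀ a1 ∈ G.act1 s, ∀ a2 ∈ G.act2 s, rk G (G.tr s a1 a2) ≤ n := by
        intro a1 ha1 a2 ha2
        have := rk_lt hacyc (⟨a1, ha1, a2, ha2, rfl⟩ : G.step s (G.tr s a1 a2))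
        omega
      obtain ⟨b, hb, hind, hbeq⟩ := hbest h s hne.2
      show aExpH G u σ1 (row) (n+1) s h ≤ Uf G u (n+1) s
      simp only [aExpH]
      rw [if_pos hne, Uf, dif_pos hne]
      apply add_le_add_right
      -- collapse the inner sum using that `row h s` is a point mass at `b`
      have hswap : ∀ a1 ∈ G.act1 s,
          ∑ a2 ∈ G.act2 s, σ1 h s a1 * row h s a2 *
            aExpH G u σ1 (row) n (G.tr s a1 a2) (h ++ [(s, a1, a2)])
          = σ1 h s a1 * aExpH G u σ1 (row) n (G.tr s a1 b) (h ++ [(s, a1, b)]) := by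
        intro a1 _
        have := hind (fun a2 => σ1 h s a1 *
          aExpH G u σ1 (row) n (G.tr s a1 a2) (h ++ [(s, a1, a2)]))
        rw [← this]
        apply Finset.sum_congr rfl
        intro a2 _
        ring
      rw [Finset.sum_congr rfl hswap]
      have h1 : ∑ a1 ∈ G.act1 s, σ1 h s a1 *
            aExpH G u σ1 (row) n (G.tr s a1 b) (h ++ [(s, a1, b)])
          ≤ g h s b := by
        apply Finset.sum_le_sum
        intro a1 ha1
        apply mul_le_mul_of_nonneg_left _ ((hσ1 h s).1 a1)
        calc aExpH G u σ1 (row) n (G.tr s a1 b) (h ++ [(s, a1, b)])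
            ≤ Uf G u n (G.tr s a1 b) := ih (G.tr s a1 b) (h ++ [(s, a1, b)]) (hrk a1 ha1 b hb)
          _ = Uf G u N (G.tr s a1 b) := Uf_stab' hacyc (hrk a1 ha1 b hb) (rk_le _)
      -- a memoryless strategy whose row at s is σ1 h s
      set σx : G.S → G.A → ℝ := fun t a => if t = s then σ1 h s a else unif G G.act1 t a
        with hσx
      have hσxmem : σx ∈ MStrat G G.act1 := by
        intro t
        by_cases ht : t = s
        · subst ht
          simp only [hσx, if_pos rfl]
          exact hσ1 h t
        · simp only [hσx, if_neg ht]
          exact unif_mem G G.act1 t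
      have h2 : g h s b ≤ ⨆ σ : ↥(MStrat G G.act1), (G.act2 s).inf' hne.2
          (fun a2 => ∑ a1 ∈ G.act1 s, σ.1 s a1 * Uf G u n (G.tr s a1 a2)) := by
        rw [hbeq]
        refine le_trans ?_ (le_ciSup (stage_bdd hC hne) ⟨σx, hσxmem⟩)
        apply le_of_eq
        apply Finset.inf'_congr _ rfl
        intro a2 ha2
        apply Finset.sum_congr rfl
        intro a1 ha1
        simp only [hσx, if_pos rfl]
        rw [Uf_stab' hacyc (rk_le _) (hrk a1 ha1 a2 ha2)]
      exact le_trans h1 h2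
    · show aExpH G u σ1 (row) (n+1) s h ≤ Uf G u (n+1) s
      simp only [aExpH]
      rw [if_neg hne, Uf, dif_neg hne]

end BR

end MemAux

open MemAux in
/-- In an acyclic finite concurrent game, memoryless mixed strategies suffice:
the value over history-dependent mixed strategies equals the value over
memoryless mixed strategies. -/
theorem memoryless_suffices (G : AGame) (hacyc : G.Acyclic) (u : G.S → ℝ) :
    (⨆ σ1 : HStrat G G.act1, ⨅ σ2 : HStrat G G.act2,
        aExpH G u σ1.1 σ2.1 (Fintype.card G.S) G.s0 [])
      = ⨆ σ1 : MStrat G G.act1, ⨅ σ2 : MStrat G G.act2,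
          aExp G u σ1.1 σ2.1 (Fintype.card G.S) G.s0 := by

  classical
  set N := Fintype.card G.S with hN
  set C := Finset.univ.sup' ⟨G.s0, Finset.mem_univ _⟩ (fun s : G.S => |u s|) with hCdef
  have hC : ∀ s, |u s| ≤ C := fun s => Finset.le_sup' (fun t : G.S => |u t|) (Finset.mem_univ s)
  have hinner : ∀ σ1 : ↥(MStrat G G.act1),
      (⨅ σ2 : ↥(MStrat G G.act2), aExp G u σ1.1 σ2.1 N G.s0) = Wf G u σ1.1 N G.s0 := by
    intro σ1
    obtain ⟨σ2s, hmem, heq⟩ := exists_best2 (u := u) hacyc σ1.2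
    apply le_antisymm
    · have hbdd : BddBelow (Set.range fun σ2 : ↥(MStrat G G.act2) =>
          aExp G u σ1.1 σ2.1 N G.s0) :=
        ⟨Wf G u σ1.1 N G.s0, by rintro y ⟨σ2, rfl⟩; exact Wf_le_aExp σ1.2 σ2.2 N G.s0⟩
      exact ciInf_le_of_le hbdd ⟨σ2s, hmem⟩ (le_of_eq (heq N G.s0 (rk_le _)))
    · exact le_ciInf fun σ2 => Wf_le_aExp σ1.2 σ2.2 N G.s0
  have hR : (⨆ σ1 : ↥(MStrat G G.act1), ⨅ σ2 : ↥(MStrat G G.act2),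
      aExp G u σ1.1 σ2.1 N G.s0) = ⨆ σ1 : ↥(MStrat G G.act1), Wf G u σ1.1 N G.s0 :=
    iSup_congr hinner
  have hbddH : ∀ σ1 : ↥(HStrat G G.act1), BddBelow (Set.range fun σ2 : ↥(HStrat G G.act2) =>
      aExpH G u σ1.1 σ2.1 N G.s0 []) := fun σ1 =>
    ⟨-((N+1)*C), by
      rintro y ⟨σ2, rfl⟩
      exact neg_le_of_abs_le (aExpH_abs hC σ1.2 σ2.2 N G.s0 [])⟩
  have hL_le : (⨆ σ1 : ↥(HStrat G G.act1), ⨅ σ2 : ↥(HStrat G G.act2),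
      aExpH G u σ1.1 σ2.1 N G.s0 []) ≤ Uf G u N G.s0 := by
    apply ciSup_le
    intro σ1
    obtain ⟨σ2b, hmem, hle⟩ := exists_br hacyc hC σ1.2
    exact ciInf_le_of_le (hbddH σ1) ⟨σ2b, hmem⟩ (hle N G.s0 [] (rk_le _))
  have hUf_le : Uf G u N G.s0 ≤ ⨆ σ1 : ↥(MStrat G G.act1), Wf G u σ1.1 N G.s0 := by
    have hbddW : BddAbove (Set.range fun σ1 : ↥(MStrat G G.act1) => Wf G u σ1.1 N G.s0) :=
      bdd_of_le (fun σ1 => Wf_le hC σ1.2 N G.s0)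
    apply le_of_forall_pos_le_add
    intro ε hε
    have hδ : (0:ℝ) < ε / (N+1) := by positivity
    obtain ⟨σ1s, hmem, hge⟩ := exists_eps (u := u) hacyc hC hδ
    have h1 := hge N G.s0 (rk_le _)
    have h2 : Wf G u σ1s N G.s0 ≤ ⨆ σ1 : ↥(MStrat G G.act1), Wf G u σ1.1 N G.s0 :=
      le_ciSup hbddW ⟨σ1s, hmem⟩
    have harith : ((N:ℝ)+1) * (ε/(N+1)) = ε := by
      field_simp
    linarith
  have hR_le : (⨆ σ1 : ↥(MStrat G G.act1), Wf G u σ1.1 N G.s0)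
      ≤ ⨆ σ1 : ↥(HStrat G G.act1), ⨅ σ2 : ↥(HStrat G G.act2),
        aExpH G u σ1.1 σ2.1 N G.s0 [] := by
    apply ciSup_le
    intro σ1
    have hbddL : BddAbove (Set.range fun σ1 : ↥(HStrat G G.act1) =>
        ⨅ σ2 : ↥(HStrat G G.act2), aExpH G u σ1.1 σ2.1 N G.s0 []) := by
      apply bdd_of_le (B := ((N:ℝ)+1)*C)
      intro σ1'
      exact ciInf_le_of_le (hbddH σ1') ⟨fun _ => unif G G.act2, lift_mem (unif_mem G G.act2)⟩
        (le_of_abs_le (aExpH_abs hC σ1'.2 (lift_mem (unif_mem G G.act2)) N G.s0 []))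
    refine le_trans ?_ (le_ciSup hbddL ⟨fun _ => σ1.1, lift_mem σ1.2⟩)
    exact le_ciInf fun σ2 => Wf_le_aExpH σ1.2 σ2.2 N G.s0 []
  rw [hR]
  exact le_antisymm (le_trans hL_le hUf_le) hR_le
end

section
/- Quantitative bound between lower and upper abstraction values: let (G, u) be a finite concurrent game, Π a compatible partition, and suppose that for every class π ∈ Π, max_{s∈π} u(s) − min_{s∈π} u(s) ≤ ε. Then for every horizon L: υ_{2L}(G↑, u↑) − υ_{2L}(G↑, u↓) ≤ L·ε, where (G↑, u↑) is the upper abstraction and u↓ is the lower utility on the same game structure G↑. -/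
open scoped BigOperators

/-- A finite concurrent two-player game structure `(S, s0, A, Γ1, Γ2, δ)`. -/
structure ConcGame where
  S : Type
  A : Type
  [fS : Fintype S]
  [dS : DecidableEq S]
  [fA : Fintype A]
  [dA : DecidableEq A]
  s0 : S
  act1 : S → Finset A
  act2 : S → Finset A
  h1 : ∀ s, (act1 s).Nonempty
  h2 : ∀ s, (act2 s).Nonempty
  tr : S → A → A → S

attribute [instance] ConcGame.fS ConcGame.dS ConcGame.fA ConcGame.dA

/-- A history: a finite sequence of (state, action pair) tuples. -/
abbrev Hist (G : ConcGame) := List (G.S × G.A × G.A)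

/-- Mixed (history-dependent) strategies for available-action map `act`:
after every history and at every state, a probability distribution
supported on the available actions. -/
def Strat (G : ConcGame) (act : G.S → Finset G.A) : Set (Hist G → G.S → G.A → ℝ) :=
  {σ | ∀ h s, (∀ a, 0 ≤ σ h s a) ∧ (∑ a ∈ act s, σ h s a = 1) ∧
        ∀ a ∉ act s, σ h s a = 0}

/-- Expected cumulative `L`-step utility of the mixed strategy profile `(σ1, σ2)`
starting at state `s` with current history `h`. -/
noncomputable def expVal (G : ConcGame) (u : G.S → ℝ)
    (σ1 σ2 : Hist G → G.S → G.A → ℝ) : ℕ → G.S → Hist G → ℝ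
  | 0, _, _ => 0
  | (L + 1), s, h =>
      u s + ∑ a1 ∈ G.act1 s, ∑ a2 ∈ G.act2 s,
        σ1 h s a1 * σ2 h s a2 *
          expVal G u σ1 σ2 L (G.tr s a1 a2) (h ++ [(s, a1, a2)])

/-- The `L`-step finite-horizon value of the game started at state `s`:
`sup` over player-1 mixed strategies of `inf` over player-2 mixed strategies
of the expected cumulative utility. -/
noncomputable def valFrom (G : ConcGame) (u : G.S → ℝ) (L : ℕ) (s : G.S) : ℝ :=
  ⨆ σ1 : Strat G G.act1, ⨅ σ2 : Strat G G.act2, expVal G u σ1.1 σ2.1 L s []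

/-- The `L`-step finite-horizon value `υ_L(G, u)` of the game. -/
noncomputable def gval (G : ConcGame) (u : G.S → ℝ) (L : ℕ) : ℝ :=
  valFrom G u L G.s0

/-- The partition induced by a setoid is compatible with the game's action sets:
equivalent states have identical available-action sets for both players. -/
def Compatible (G : ConcGame) (r : Setoid G.S) : Prop :=
  ∀ s s', r.r s s' → G.act1 s = G.act1 s' ∧ G.act2 s = G.act2 s'

section Abstraction

open Classical

variable (G : ConcGame) (r : Setoid G.S)

/-- The partition class (as a set of original states) of an abstract state `q`. -/
def classOf (q : Quotient r) : Set G.S := {s | Quotient.mk r s = q}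

/-- State space of the abstracted games: partition classes plus dummy states
`(class, action, action)`. -/
abbrev AbsS := Quotient r ⊕ (Quotient r × G.A × G.A)

/-- Action space of the abstracted games: original actions, plus choices of a
successor class at dummy states. -/
abbrev AbsA := G.A ⊕ Quotient r

/-- The finset of successor classes reachable from some state of class `π`
under the action pair `(a1, a2)` (the set `X_d` for dummy state `d = (π,a1,a2)`). -/
noncomputable def succClasses (π : Quotient r) (a1 a2 : G.A) : Finset (Quotient r) :=
  letI : DecidableEq (Quotient r) := Classical.decEq _
  letI : Fintype (Quotient r) := Fintype.ofFinite _
  (Finset.univ.filter (fun s => Quotient.mk r s = π)).image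
    (fun s => Quotient.mk r (G.tr s a1 a2))

lemma succClasses_nonempty (π : Quotient r) (a1 a2 : G.A) :
    (succClasses G r π a1 a2).Nonempty := by
  classical
  refine ⟨Quotient.mk r (G.tr (Quotient.out π) a1 a2), ?_⟩
  unfold succClasses
  simp only [Finset.mem_image, Finset.mem_filter, Finset.mem_univ, true_and]
  exact ⟨Quotient.out π, Quotient.out_eq π, rfl⟩

/-- The lower abstraction `G↓` of `G` with respect to the partition induced by `r`:
transitions from a class go to the corresponding dummy state, and at dummy states
player 2 (the minimizer) alone chooses the successor class. -/
noncomputable def lowerAbs : ConcGame :=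
  letI : DecidableEq (Quotient r) := Classical.decEq _
  letI : Fintype (Quotient r) := Fintype.ofFinite _
  { S := AbsS G r
    A := AbsA G r
    s0 := Sum.inl (Quotient.mk r G.s0)
    act1 := fun s => match s with
      | Sum.inl q => (G.act1 (Quotient.out q)).image Sum.inl
      | Sum.inr d => {Sum.inr d.1}
    act2 := fun s => match s with
      | Sum.inl q => (G.act2 (Quotient.out q)).image Sum.inl
      | Sum.inr d => (succClasses G r d.1 d.2.1 d.2.2).image Sum.inr
    h1 := by
      rintro (q | d)
      · exact (G.h1 _).image _
      · exact Finset.singleton_nonempty _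
    h2 := by
      rintro (q | d)
      · exact (G.h2 _).image _
      · exact (succClasses_nonempty G r d.1 d.2.1 d.2.2).image _
    tr := fun s a1 a2 => match s, a1, a2 with
      | Sum.inl q, Sum.inl b1, Sum.inl b2 => Sum.inr (q, b1, b2)
      | Sum.inl q, _, _ => Sum.inl q
      | Sum.inr d, _, Sum.inr π' => Sum.inl π'
      | Sum.inr d, _, _ => Sum.inl d.1 }

/-- The upper abstraction `G↑` of `G` with respect to the partition induced by `r`:
transitions from a class go to the corresponding dummy state, and at dummy states
player 1 (the maximizer) alone chooses the successor class. -/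
noncomputable def upperAbs : ConcGame :=
  letI : DecidableEq (Quotient r) := Classical.decEq _
  letI : Fintype (Quotient r) := Fintype.ofFinite _
  { S := AbsS G r
    A := AbsA G r
    s0 := Sum.inl (Quotient.mk r G.s0)
    act1 := fun s => match s with
      | Sum.inl q => (G.act1 (Quotient.out q)).image Sum.inl
      | Sum.inr d => (succClasses G r d.1 d.2.1 d.2.2).image Sum.inr
    act2 := fun s => match s with
      | Sum.inl q => (G.act2 (Quotient.out q)).image Sum.inl
      | Sum.inr d => {Sum.inr d.1}
    h1 := by
      rintro (q | d)
      · exact (G.h1 _).image _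
      · exact (succClasses_nonempty G r d.1 d.2.1 d.2.2).image _
    h2 := by
      rintro (q | d)
      · exact (G.h2 _).image _
      · exact Finset.singleton_nonempty _
    tr := fun s a1 a2 => match s, a1, a2 with
      | Sum.inl q, Sum.inl b1, Sum.inl b2 => Sum.inr (q, b1, b2)
      | Sum.inl q, _, _ => Sum.inl q
      | Sum.inr d, Sum.inr π', _ => Sum.inl π'
      | Sum.inr d, _, _ => Sum.inl d.1 }

/-- Lower abstract utility: minimum of `u` over the class, `0` at dummy states. -/
noncomputable def lowerU (u : G.S → ℝ) : AbsS G r → ℝ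
  | Sum.inl q => sInf (u '' classOf G r q)
  | Sum.inr _ => 0

/-- Upper abstract utility: maximum of `u` over the class, `0` at dummy states. -/
noncomputable def upperU (u : G.S → ℝ) : AbsS G r → ℝ
  | Sum.inl q => sSup (u '' classOf G r q)
  | Sum.inr _ => 0

end Abstraction

section Aux

open Classical Finset

/-- Weighted double sum is bounded by a uniform bound on the values. -/
lemma wsum_le {A : Type} (A1 A2 : Finset A) (w1 w2 : A → ℝ) (f : A → A → ℝ) (c : ℝ)
    (hw1 : ∀ a, 0 ≤ w1 a) (hw2 : ∀ a, 0 ≤ w2 a)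
    (hs1 : ∑ a ∈ A1, w1 a = 1) (hs2 : ∑ a ∈ A2, w2 a = 1)
    (hf : ∀ a1 ∈ A1, ∀ a2 ∈ A2, f a1 a2 ≤ c) :
    ∑ a1 ∈ A1, ∑ a2 ∈ A2, w1 a1 * w2 a2 * f a1 a2 ≤ c := by
  have h1 : ∑ a1 ∈ A1, ∑ a2 ∈ A2, w1 a1 * w2 a2 * f a1 a2
      ≤ ∑ a1 ∈ A1, ∑ a2 ∈ A2, w1 a1 * w2 a2 * c := by
    refine Finset.sum_le_sum fun a1 h1 => Finset.sum_le_sum fun a2 h2 => ?_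
    exact mul_le_mul_of_nonneg_left (hf a1 h1 a2 h2) (mul_nonneg (hw1 a1) (hw2 a2))
  have h2 : ∑ a1 ∈ A1, ∑ a2 ∈ A2, w1 a1 * w2 a2 * c = c := by
    have : ∀ a1 ∈ A1, ∑ a2 ∈ A2, w1 a1 * w2 a2 * c = w1 a1 * c := by
      intro a1 _
      have : ∑ a2 ∈ A2, w1 a1 * w2 a2 * c = (∑ a2 ∈ A2, w2 a2) * (w1 a1 * c) := by
        rw [Finset.sum_mul]
        exact Finset.sum_congr rfl fun a2 _ => by ring
      rw [this, hs2, one_mul]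
    rw [Finset.sum_congr rfl this, ← Finset.sum_mul, hs1, one_mul]
  linarith

lemma wsum_abs_le {A : Type} (A1 A2 : Finset A) (w1 w2 : A → ℝ) (f : A → A → ℝ) (c : ℝ)
    (hw1 : ∀ a, 0 ≤ w1 a) (hw2 : ∀ a, 0 ≤ w2 a)
    (hs1 : ∑ a ∈ A1, w1 a = 1) (hs2 : ∑ a ∈ A2, w2 a = 1)
    (hf : ∀ a1 ∈ A1, ∀ a2 ∈ A2, |f a1 a2| ≤ c) :
    |∑ a1 ∈ A1, ∑ a2 ∈ A2, w1 a1 * w2 a2 * f a1 a2| ≤ c := by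
  calc |∑ a1 ∈ A1, ∑ a2 ∈ A2, w1 a1 * w2 a2 * f a1 a2|
      ≤ ∑ a1 ∈ A1, |∑ a2 ∈ A2, w1 a1 * w2 a2 * f a1 a2| := Finset.abs_sum_le_sum_abs _ _
    _ ≤ ∑ a1 ∈ A1, ∑ a2 ∈ A2, |w1 a1 * w2 a2 * f a1 a2| := by
        exact Finset.sum_le_sum fun a1 _ => Finset.abs_sum_le_sum_abs _ _
    _ = ∑ a1 ∈ A1, ∑ a2 ∈ A2, w1 a1 * w2 a2 * |f a1 a2| := by
        refine Finset.sum_congr rfl fun a1 _ => Finset.sum_congr rfl fun a2 _ => ?_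
        rw [abs_mul, abs_mul, abs_of_nonneg (hw1 a1), abs_of_nonneg (hw2 a2)]
    _ ≤ c := wsum_le A1 A2 w1 w2 _ c hw1 hw2 hs1 hs2 hf

/-- Uniform bound on the utility function. -/
noncomputable def uBound (GA : ConcGame) (u : GA.S → ℝ) : ℝ :=
  Finset.univ.sup' ⟨GA.s0, Finset.mem_univ _⟩ fun s => |u s|

lemma abs_le_uBound (GA : ConcGame) (u : GA.S → ℝ) (s : GA.S) : |u s| ≤ uBound GA u := by
  unfold uBound; exact Finset.le_sup' (fun s => |u s|) (Finset.mem_univ s)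

lemma expVal_abs_le (GA : ConcGame) (u : GA.S → ℝ)
    (σ1 σ2 : Hist GA → GA.S → GA.A → ℝ)
    (hσ1 : σ1 ∈ Strat GA GA.act1) (hσ2 : σ2 ∈ Strat GA GA.act2) :
    ∀ (n : ℕ) (s : GA.S) (h : Hist GA),
      |expVal GA u σ1 σ2 n s h| ≤ n * uBound GA u := by
  intro n
  induction n with
  | zero => intro s h; simp [expVal]
  | succ n ih =>
    intro s h
    have hb : |∑ a1 ∈ GA.act1 s, ∑ a2 ∈ GA.act2 s,
        σ1 h s a1 * σ2 h s a2 * expVal GA u σ1 σ2 n (GA.tr s a1 a2) (h ++ [(s, a1, a2)])|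
        ≤ n * uBound GA u := by
      refine wsum_abs_le _ _ _ _ _ _ (fun a => (hσ1 h s).1 a) (fun a => (hσ2 h s).1 a)
        (hσ1 h s).2.1 (hσ2 h s).2.1 fun a1 _ a2 _ => ih _ _
    have := abs_le_uBound GA u s
    calc |expVal GA u σ1 σ2 (n+1) s h| ≤ |u s| + _ := by
          rw [show expVal GA u σ1 σ2 (n+1) s h = u s + _ from rfl]
          exact abs_add_le _ _
      _ ≤ uBound GA u + n * uBound GA u := add_le_add this hb
      _ = (n+1 : ℕ) * uBound GA u := by push_cast; ring

lemma strat_nonempty (GA : ConcGame) (act : GA.S → Finset GA.A)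
    (hne : ∀ s, (act s).Nonempty) : (Strat GA act).Nonempty := by
  classical
  refine ⟨fun _ s a => if a = (hne s).choose then 1 else 0, fun h s => ⟨?_, ?_, ?_⟩⟩
  · intro a; dsimp only; split <;> norm_num
  · dsimp only; rw [Finset.sum_ite_eq' (act s) (hne s).choose (fun _ => (1:ℝ))]
    simp [(hne s).choose_spec]
  · intro a ha
    have : a ≠ (hne s).choose := fun e => ha (e ▸ (hne s).choose_spec)
    dsimp only; simp [this]

end Aux
section Core

open Classical

variable (G : ConcGame) (r : Setoid G.S)

/-- Bound on the value difference: classes pending vs horizon. -/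
noncomputable def Bd (ε : ℝ) (n : ℕ) : AbsS G r → ℝ :=
  Sum.elim (fun _ => (((n+1)/2 : ℕ) : ℝ) * ε) (fun _ => ((n/2 : ℕ) : ℝ) * ε)

lemma upperAbs_act1_inl (q : Quotient r) (a : (upperAbs G r).A)
    (ha : a ∈ (upperAbs G r).act1 (Sum.inl q)) :
    ∃ b, a = Sum.inl b := by
  replace ha := Finset.mem_image.mp ha
  obtain ⟨b, _, rfl⟩ := ha
  exact ⟨b, rfl⟩

lemma upperAbs_act2_inl (q : Quotient r) (a : (upperAbs G r).A)
    (ha : a ∈ (upperAbs G r).act2 (Sum.inl q)) :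
    ∃ b, a = Sum.inl b := by
  replace ha := Finset.mem_image.mp ha
  obtain ⟨b, _, rfl⟩ := ha
  exact ⟨b, rfl⟩

lemma upperAbs_act1_inr (d : Quotient r × G.A × G.A) (a : (upperAbs G r).A)
    (ha : a ∈ (upperAbs G r).act1 (Sum.inr d)) :
    ∃ π', a = Sum.inr π' := by
  replace ha := Finset.mem_image.mp ha
  obtain ⟨π', _, rfl⟩ := ha
  exact ⟨π', rfl⟩

lemma upperAbs_tr_inl (q : Quotient r) (b1 b2 : G.A) :
    (upperAbs G r).tr (Sum.inl q) (Sum.inl b1) (Sum.inl b2) = Sum.inr (q, b1, b2) := rfl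

lemma upperAbs_tr_inr (d : Quotient r × G.A × G.A) (π' : Quotient r)
    (a2 : (upperAbs G r).A) :
    (upperAbs G r).tr (Sum.inr d) (Sum.inr π') a2 = Sum.inl π' := by
  cases a2 <;> rfl

lemma expVal_diff_le (u : G.S → ℝ) (ε : ℝ) (hε0 : 0 ≤ ε)
    (hε : ∀ q : Quotient r,
      sSup (u '' classOf G r q) - sInf (u '' classOf G r q) ≤ ε)
    (σ1 σ2 : Hist (upperAbs G r) → (upperAbs G r).S → (upperAbs G r).A → ℝ)
    (hσ1 : σ1 ∈ Strat (upperAbs G r) (upperAbs G r).act1)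
    (hσ2 : σ2 ∈ Strat (upperAbs G r) (upperAbs G r).act2) :
    ∀ (n : ℕ) (s : (upperAbs G r).S) (h : Hist (upperAbs G r)),
      expVal (upperAbs G r) (upperU G r u) σ1 σ2 n s h
        - expVal (upperAbs G r) (lowerU G r u) σ1 σ2 n s h ≤ Bd G r ε n s := by
  intro n
  induction n with
  | zero =>
    intro s h
    cases s <;> simp [expVal, Bd]
  | succ n ih =>
    intro s h
    have key : expVal (upperAbs G r) (upperU G r u) σ1 σ2 (n+1) s h
        - expVal (upperAbs G r) (lowerU G r u) σ1 σ2 (n+1) s h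
        = (upperU G r u s - lowerU G r u s)
          + ∑ a1 ∈ (upperAbs G r).act1 s, ∑ a2 ∈ (upperAbs G r).act2 s,
              σ1 h s a1 * σ2 h s a2 *
                (expVal (upperAbs G r) (upperU G r u) σ1 σ2 n
                    ((upperAbs G r).tr s a1 a2) (h ++ [(s, a1, a2)])
                  - expVal (upperAbs G r) (lowerU G r u) σ1 σ2 n
                    ((upperAbs G r).tr s a1 a2) (h ++ [(s, a1, a2)])) := by
      simp only [expVal, mul_sub, Finset.sum_sub_distrib]
      ring
    rw [key]
    cases s with
    | inl q =>
      have h1 : upperU G r u (Sum.inl q) - lowerU G r u (Sum.inl q) ≤ ε := hε q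
      have h2 : ∑ a1 ∈ (upperAbs G r).act1 (Sum.inl q),
          ∑ a2 ∈ (upperAbs G r).act2 (Sum.inl q),
            σ1 h (Sum.inl q) a1 * σ2 h (Sum.inl q) a2 *
              (expVal (upperAbs G r) (upperU G r u) σ1 σ2 n
                  ((upperAbs G r).tr (Sum.inl q) a1 a2) (h ++ ([(Sum.inl q, a1, a2)] : Hist (upperAbs G r)))
                - expVal (upperAbs G r) (lowerU G r u) σ1 σ2 n
                  ((upperAbs G r).tr (Sum.inl q) a1 a2) (h ++ ([(Sum.inl q, a1, a2)] : Hist (upperAbs G r))))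
          ≤ ((n/2 : ℕ) : ℝ) * ε := by
        refine wsum_le _ _ _ _ _ _ (fun a => (hσ1 h _).1 a) (fun a => (hσ2 h _).1 a)
          (hσ1 h _).2.1 (hσ2 h _).2.1 ?_
        intro a1 ha1 a2 ha2
        obtain ⟨b1, rfl⟩ := upperAbs_act1_inl G r q a1 ha1
        obtain ⟨b2, rfl⟩ := upperAbs_act2_inl G r q a2 ha2
        rw [upperAbs_tr_inl]
        exact ih _ _
      have hB : Bd G r ε (n+1) (Sum.inl q) = ε + ((n/2 : ℕ) : ℝ) * ε := by
        have : (n+1+1)/2 = n/2 + 1 := by omega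
        simp only [Bd, Sum.elim_inl, this]
        push_cast
        ring
      rw [hB]
      exact add_le_add h1 h2
    | inr d =>
      have h1 : upperU G r u (Sum.inr d) - lowerU G r u (Sum.inr d) = 0 := by
        simp [upperU, lowerU]
      have h2 : ∑ a1 ∈ (upperAbs G r).act1 (Sum.inr d),
          ∑ a2 ∈ (upperAbs G r).act2 (Sum.inr d),
            σ1 h (Sum.inr d) a1 * σ2 h (Sum.inr d) a2 *
              (expVal (upperAbs G r) (upperU G r u) σ1 σ2 n
                  ((upperAbs G r).tr (Sum.inr d) a1 a2) (h ++ ([(Sum.inr d, a1, a2)] : Hist (upperAbs G r)))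
                - expVal (upperAbs G r) (lowerU G r u) σ1 σ2 n
                  ((upperAbs G r).tr (Sum.inr d) a1 a2) (h ++ ([(Sum.inr d, a1, a2)] : Hist (upperAbs G r))))
          ≤ (((n+1)/2 : ℕ) : ℝ) * ε := by
        refine wsum_le _ _ _ _ _ _ (fun a => (hσ1 h _).1 a) (fun a => (hσ2 h _).1 a)
          (hσ1 h _).2.1 (hσ2 h _).2.1 ?_
        intro a1 ha1 a2 ha2
        obtain ⟨π', rfl⟩ := upperAbs_act1_inr G r d a1 ha1
        rw [upperAbs_tr_inr]
        exact ih _ _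
      have hB : Bd G r ε (n+1) (Sum.inr d) = (((n+1)/2 : ℕ) : ℝ) * ε := rfl
      rw [hB, h1]
      linarith

end Core
/-- Quantitative bound between upper and lower utilities on the upper abstraction:
if within every partition class the utility `u` varies by at most `ε`, then the
`2L`-step values of the upper abstraction structure under the upper and lower
abstract utilities differ by at most `L·ε`. -/
theorem abstraction_value_gap (G : ConcGame) (u : G.S → ℝ) (r : Setoid G.S)
    (hc : Compatible G r) (ε : ℝ)
    (hε : ∀ q : Quotient r,
      sSup (u '' classOf G r q) - sInf (u '' classOf G r q) ≤ ε) (L : ℕ) :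
    gval (upperAbs G r) (upperU G r u) (2 * L)
      - gval (upperAbs G r) (lowerU G r u) (2 * L) ≤ L * ε := by
  classical
  set GA := upperAbs G r with hGA
  set u1 := upperU G r u
  set u2 := lowerU G r u
  -- ε is nonnegative
  have hε0 : 0 ≤ ε := by
    have hq := hε (Quotient.mk r G.s0)
    have hne : (u '' classOf G r (Quotient.mk r G.s0)).Nonempty :=
      ⟨u G.s0, G.s0, rfl, rfl⟩
    have hfin : (u '' classOf G r (Quotient.mk r G.s0)).Finite :=
      (Set.toFinite _).image u
    have := csInf_le_csSup hne hfin.bddBelow hfin.bddAbove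
    linarith
  have hBd : Bd G r ε (2 * L) GA.s0 = (L : ℝ) * ε := by
    have h0 : GA.s0 = Sum.inl (Quotient.mk r G.s0) := rfl
    have h2 : (2 * L + 1) / 2 = L := by omega
    rw [h0]
    simp only [Bd, Sum.elim_inl, h2]
  haveI hne1 : Nonempty ↥(Strat GA GA.act1) :=
    (strat_nonempty GA GA.act1 GA.h1).to_subtype
  haveI hne2 : Nonempty ↥(Strat GA GA.act2) :=
    (strat_nonempty GA GA.act2 GA.h2).to_subtype
  set n := 2 * L
  -- boundedness facts
  have habs : ∀ (v : GA.S → ℝ) (σ1 : ↥(Strat GA GA.act1)) (σ2 : ↥(Strat GA GA.act2)),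
      |expVal GA v σ1.1 σ2.1 n GA.s0 []| ≤ n * uBound GA v := fun v σ1 σ2 =>
    expVal_abs_le GA v σ1.1 σ2.1 σ1.2 σ2.2 n GA.s0 []
  have hbb : ∀ (v : GA.S → ℝ) (σ1 : ↥(Strat GA GA.act1)),
      BddBelow (Set.range fun σ2 : ↥(Strat GA GA.act2) =>
        expVal GA v σ1.1 σ2.1 n GA.s0 []) := by
    intro v σ1
    refine ⟨-(n * uBound GA v), ?_⟩
    rintro _ ⟨σ2, rfl⟩
    have := habs v σ1 σ2
    have := neg_abs_le (expVal GA v σ1.1 σ2.1 n GA.s0 [])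
    linarith
  -- step A : for each σ1, inf over σ2 comparison
  have stepA : ∀ σ1 : ↥(Strat GA GA.act1),
      (⨅ σ2 : ↥(Strat GA GA.act2), expVal GA u1 σ1.1 σ2.1 n GA.s0 [])
        ≤ (⨅ σ2 : ↥(Strat GA GA.act2), expVal GA u2 σ1.1 σ2.1 n GA.s0 [])
          + (L : ℝ) * ε := by
    intro σ1
    rw [← sub_le_iff_le_add]
    refine le_ciInf fun σ2 => ?_
    have hdiff : expVal GA u1 σ1.1 σ2.1 n GA.s0 []
        - expVal GA u2 σ1.1 σ2.1 n GA.s0 [] ≤ (L : ℝ) * ε := by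
      have := expVal_diff_le G r u ε hε0 hε σ1.1 σ2.1 σ1.2 σ2.2 n GA.s0 []
      rw [hBd] at this
      exact this
    have hinf : (⨅ σ2 : ↥(Strat GA GA.act2), expVal GA u1 σ1.1 σ2.1 n GA.s0 [])
        ≤ expVal GA u1 σ1.1 σ2.1 n GA.s0 [] := ciInf_le (hbb u1 σ1) σ2
    linarith
  -- step B : sup over σ1
  have hba : BddAbove (Set.range fun σ1 : ↥(Strat GA GA.act1) =>
      ⨅ σ2 : ↥(Strat GA GA.act2), expVal GA u2 σ1.1 σ2.1 n GA.s0 []) := by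
    refine ⟨n * uBound GA u2, ?_⟩
    rintro _ ⟨σ1, rfl⟩
    obtain ⟨σ2⟩ := hne2
    refine (ciInf_le (hbb u2 σ1) σ2).trans ?_
    have := habs u2 σ1 σ2
    exact (le_abs_self _).trans this
  have stepB : (⨆ σ1 : ↥(Strat GA GA.act1),
        ⨅ σ2 : ↥(Strat GA GA.act2), expVal GA u1 σ1.1 σ2.1 n GA.s0 [])
      ≤ (⨆ σ1 : ↥(Strat GA GA.act1),
        ⨅ σ2 : ↥(Strat GA GA.act2), expVal GA u2 σ1.1 σ2.1 n GA.s0 [])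
        + (L : ℝ) * ε := by
    refine ciSup_le fun σ1 => (stepA σ1).trans ?_
    exact add_le_add_left (le_ciSup hba σ1) _
  have hg : gval GA u1 n - gval GA u2 n ≤ (L : ℝ) * ε := by
    unfold gval valFrom
    linarith [stepB]
  exact hg
end
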